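/- Let G be a simple graph on a finite vertex type V with edge set E, let T ⊆ V be a set of terminals, let C ⊆ E with D = E ∖ C, and let k, t ∈ ℕ. Define the graph G' on vertex type V ⊕ (Σ e : E, Fin (m e)), where m e = 1 for e ∈ C and m e = k + 1 for e ∈ D, in which a vertex v ∈ V is adjacent to a subdivision vertex ⟨e, i⟩ if and only if v is an endpoint of e, and there are no other edges. Then there exists a set B ⊆ C with |B| ≤ k such that the edge set of every Steiner tree of G for T with at most t edges intersects B, if and only if there exists a set B' of edges of G' with |B'| ≤ k such that the edge set of every Steiner tree of G' for {inl v : v ∈ T} with at most 2t edges intersects B'. -/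

import Mathlib

/-- The subdivision graph: every edge `e` of `G` is replaced by `m e` parallel subdivided
edges.  A vertex `v` of `G` is adjacent to a subdivision vertex `⟨e, i⟩` iff `v` is an
endpoint of `e`; there are no other edges. -/
def subdivGraph {V : Type*} (G : SimpleGraph V) (m : G.edgeSet → ℕ) :
    SimpleGraph (V ⊕ (Σ e : G.edgeSet, Fin (m e))) where
  Adj x y :=
    match x, y with
    | Sum.inl v, Sum.inr p => v ∈ (p.1 : Sym2 V)
    | Sum.inr p, Sum.inl v => v ∈ (p.1 : Sym2 V)
    | _, _ => False
  symm := by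
    constructor
    rintro (v | p) (w | q) h
    · exact h.elim
    · exact h
    · exact h
    · exact h.elim
  loopless := ⟨by rintro (v | p) h <;> exact h⟩

/-- A Steiner tree of `H` for the terminal set `T` : a subgraph that is a tree (connected and
acyclic) whose vertex set contains `T`. -/
def IsSteinerTree {W : Type*} (H : SimpleGraph W) (T : Set W) (H' : H.Subgraph) : Prop :=
  H'.coe.IsTree ∧ T ⊆ H'.verts

namespace SteinerAux

open SimpleGraph Sum

variable {V : Type*} {G : SimpleGraph V} {m : G.edgeSet → ℕ}

lemma vert_of_mem_edge {H' : G.Subgraph} {f : Sym2 V} (hf : f ∈ H'.edgeSet) {v : V}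
    (hv : v ∈ f) : v ∈ H'.verts := by
  induction f with
  | _ a b =>
    rw [SimpleGraph.Subgraph.mem_edgeSet] at hf
    rcases Sym2.mem_iff.1 hv with rfl | rfl
    · exact hf.fst_mem
    · exact hf.snd_mem

lemma subdivGraph_adj_inl_inr {v : V} {p : Σ e : G.edgeSet, Fin (m e)} :
    (subdivGraph G m).Adj (Sum.inl v) (Sum.inr p) ↔ v ∈ (p.1 : Sym2 V) := Iff.rfl

lemma subdivGraph_adj_inr_inl {v : V} {p : Σ e : G.edgeSet, Fin (m e)} :
    (subdivGraph G m).Adj (Sum.inr p) (Sum.inl v) ↔ v ∈ (p.1 : Sym2 V) := Iff.rfl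

lemma subdivGraph_adj_cases {x y : V ⊕ (Σ e : G.edgeSet, Fin (m e))}
    (h : (subdivGraph G m).Adj x y) :
    (∃ v p, x = Sum.inl v ∧ y = Sum.inr p ∧ v ∈ (p.1 : Sym2 V)) ∨
      (∃ v p, x = Sum.inr p ∧ y = Sum.inl v ∧ v ∈ (p.1 : Sym2 V)) := by
  rcases x with v | p <;> rcases y with w | q
  · exact h.elim
  · exact Or.inl ⟨v, q, rfl, rfl, h⟩
  · exact Or.inr ⟨w, p, rfl, rfl, h⟩
  · exact h.elim

/-- Contraction of a subgraph of the subdivision graph back to a subgraph of `G`. -/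
def contr (H'' : (subdivGraph G m).Subgraph) : G.Subgraph where
  verts := {v | Sum.inl v ∈ H''.verts}
  Adj u w := u ≠ w ∧ ∃ p : Σ e : G.edgeSet, Fin (m e),
    H''.Adj (Sum.inl u) (Sum.inr p) ∧ H''.Adj (Sum.inl w) (Sum.inr p)
  adj_sub := by
    rintro u w ⟨hne, p, h1, h2⟩
    have g1 : u ∈ (p.1 : Sym2 V) := H''.adj_sub h1
    have g2 : w ∈ (p.1 : Sym2 V) := H''.adj_sub h2
    have : (p.1 : Sym2 V) = s(u, w) := (Sym2.mem_and_mem_iff hne).1 ⟨g1, g2⟩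
    have h2' := p.1.2
    rw [this] at h2'
    exact (SimpleGraph.mem_edgeSet G).1 h2'
  edge_vert := by
    rintro u w ⟨hne, p, h1, h2⟩
    exact H''.edge_vert h1
  symm := by
    constructor
    rintro u w ⟨hne, p, h1, h2⟩
    exact ⟨hne.symm, p, h2, h1⟩

lemma contr_adj_edge {H'' : (subdivGraph G m).Subgraph} {u w : V}
    (h : (contr H'').Adj u w) : s(u, w) ∈ G.edgeSet ∧
      ∀ p : Σ e : G.edgeSet, Fin (m e),
        H''.Adj (Sum.inl u) (Sum.inr p) → H''.Adj (Sum.inl w) (Sum.inr p) →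
          (p.1 : Sym2 V) = s(u, w) := by
  obtain ⟨hne, p, h1, h2⟩ := h
  constructor
  · exact (contr H'').adj_sub ⟨hne, p, h1, h2⟩
  · intro q q1 q2
    exact (Sym2.mem_and_mem_iff hne).1 ⟨H''.adj_sub q1, H''.adj_sub q2⟩

/-- Subdivision of a subgraph of `G`, using copy `c e` for each edge `e`. -/
def subdivS (H' : G.Subgraph) (c : ∀ e : G.edgeSet, Fin (m e)) :
    (subdivGraph G m).Subgraph where
  verts := (Sum.inl '' H'.verts) ∪
    {x | ∃ e : G.edgeSet, (e : Sym2 V) ∈ H'.edgeSet ∧ x = Sum.inr ⟨e, c e⟩}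
  Adj x y := ∃ (e : G.edgeSet) (v : V), (e : Sym2 V) ∈ H'.edgeSet ∧ v ∈ (e : Sym2 V) ∧
      ((x = Sum.inl v ∧ y = Sum.inr ⟨e, c e⟩) ∨ (y = Sum.inl v ∧ x = Sum.inr ⟨e, c e⟩))
  adj_sub := by
    rintro x y ⟨e, v, he, hv, ⟨rfl, rfl⟩ | ⟨rfl, rfl⟩⟩
    · exact hv
    · exact hv
  edge_vert := by
    rintro x y ⟨e, v, he, hv, ⟨rfl, rfl⟩ | ⟨rfl, rfl⟩⟩
    · exact Or.inl ⟨v, vert_of_mem_edge he hv, rfl⟩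
    · exact Or.inr ⟨e, he, rfl⟩
  symm := by
    constructor
    rintro x y ⟨e, v, he, hv, h | h⟩
    · exact ⟨e, v, he, hv, Or.inr h⟩
    · exact ⟨e, v, he, hv, Or.inl h⟩

variable {H' : G.Subgraph} {c : ∀ e : G.edgeSet, Fin (m e)}

lemma subdivS_verts_inl {v : V} : Sum.inl v ∈ (subdivS H' c).verts ↔ v ∈ H'.verts := by
  simp [subdivS]

lemma subdivS_verts_inr {pr : Σ e : G.edgeSet, Fin (m e)} :
    Sum.inr pr ∈ (subdivS H' c).verts ↔ (pr.1 : Sym2 V) ∈ H'.edgeSet ∧ pr.2 = c pr.1 := by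
  constructor
  · rintro (⟨v, _, h⟩ | ⟨e, he, h⟩)
    · exact absurd h (by simp)
    · obtain ⟨rfl, h2⟩ := Sigma.mk.inj_iff.1 (Sum.inr.inj h)
      exact ⟨he, eq_of_heq h2⟩
  · rintro ⟨he, hpr⟩
    exact Or.inr ⟨pr.1, he, by rw [← hpr]⟩

lemma subdivS_adj_inl_inr {v : V} {pr : Σ e : G.edgeSet, Fin (m e)} :
    (subdivS H' c).Adj (Sum.inl v) (Sum.inr pr) ↔
      (pr.1 : Sym2 V) ∈ H'.edgeSet ∧ v ∈ (pr.1 : Sym2 V) ∧ pr.2 = c pr.1 := by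
  constructor
  · rintro ⟨e, w, he, hw, ⟨h1, h2⟩ | ⟨h1, h2⟩⟩
    · obtain rfl : v = w := Sum.inl.inj h1
      obtain ⟨rfl, h3⟩ := Sigma.mk.inj_iff.1 (Sum.inr.inj h2)
      exact ⟨he, hw, eq_of_heq h3⟩
    · exact absurd h2 (by simp)
  · rintro ⟨he, hv, hpr⟩
    exact ⟨pr.1, v, he, hv, Or.inl ⟨rfl, by rw [← hpr]⟩⟩

lemma subdivS_adj_cases {x y : V ⊕ (Σ e : G.edgeSet, Fin (m e))}
    (h : (subdivS H' c).Adj x y) :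
    (∃ v pr, x = Sum.inl v ∧ y = Sum.inr pr) ∨ (∃ v pr, x = Sum.inr pr ∧ y = Sum.inl v) := by
  rcases h with ⟨e, v, he, hv, ⟨h1, h2⟩ | ⟨h1, h2⟩⟩
  · exact Or.inl ⟨v, _, h1, h2⟩
  · exact Or.inr ⟨v, _, h2, h1⟩


section Walks

open SimpleGraph.Walk

variable {H'' : (subdivGraph G m).Subgraph}

lemma proj_reach (n : ℕ) :
    ∀ {x y : H''.verts} (p : H''.coe.Walk x y) {u w : V}
      (_ : x.1 = Sum.inl u) (_ : y.1 = Sum.inl w)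
      (hu : u ∈ (contr H'').verts) (hw : w ∈ (contr H'').verts),
      p.length ≤ n → (contr H'').coe.Reachable ⟨u, hu⟩ ⟨w, hw⟩ := by
  induction n with
  | zero =>
    intro x y p u w hxu hyw hu hw hlen
    cases p with
    | nil =>
      obtain rfl : u = w := by rw [hxu] at hyw; exact Sum.inl.inj hyw
      exact Reachable.refl _
    | cons h q => simp at hlen
  | succ n ih =>
    intro x y p u w hxu hyw hu hw hlen
    cases p with
    | nil =>
      obtain rfl : u = w := by rw [hxu] at hyw; exact Sum.inl.inj hyw
      exact Reachable.refl _
    | @cons _ z _ h q =>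
      have hadj : (subdivGraph G m).Adj x.1 z.1 := H''.adj_sub h
      rw [hxu] at hadj
      rcases subdivGraph_adj_cases hadj with ⟨v', p0, -, hz1, -⟩ | ⟨v', p0, hbad, -, -⟩
      swap
      · simp at hbad
      cases q with
      | nil =>
        rw [hyw] at hz1; simp at hz1
      | @cons _ z2 _ h2 q2 =>
        have hadj2 : (subdivGraph G m).Adj z.1 z2.1 := H''.adj_sub h2
        rw [hz1] at hadj2
        rcases subdivGraph_adj_cases hadj2 with ⟨v2, p1, hbad, -, -⟩ | ⟨u2, p1, hp1, hz2, hmem2⟩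
        · simp at hbad
        have hz1' : z.1 = Sum.inr p1 := hz1.trans hp1
        have hu2 : Sum.inl u2 ∈ H''.verts := by rw [← hz2]; exact z2.2
        have hlen2 : q2.length ≤ n := by simp at hlen; omega
        have hrest : (contr H'').coe.Reachable ⟨u2, hu2⟩ ⟨w, hw⟩ :=
          ih q2 hz2 hyw hu2 hw hlen2
        by_cases hcase : u = u2
        · subst hcase
          exact hrest
        · have hA : H''.Adj (Sum.inl u) (Sum.inr p1) := by
            rw [← hxu, ← hz1']; exact h
          have hB : H''.Adj (Sum.inl u2) (Sum.inr p1) := by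
            rw [← hz2, ← hz1']; exact H''.adj_symm h2
          have hadj' : (contr H'').Adj u u2 := ⟨hcase, p1, hA, hB⟩
          have hadj'' : (contr H'').coe.Adj ⟨u, hu⟩ ⟨u2, hu2⟩ := hadj'
          exact hadj''.reachable.trans hrest

lemma mem_support_of_edge {α : Type*} {Gg : SimpleGraph α} {v w t : α} (p : Gg.Walk v w)
    (ε : Sym2 α) (hε : ε ∈ p.edges) (ht : t ∈ ε) : t ∈ p.support := by
  induction ε with
  | _ a b =>
    rcases Sym2.mem_iff.1 ht with rfl | rfl
    · exact p.fst_mem_support_of_mem_edges hε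
    · exact p.snd_mem_support_of_mem_edges hε

lemma lift_path {x y : (contr H'').verts}
    (p : (contr H'').coe.Walk x y) (hp : p.IsPath) :
    ∃ Q : H''.coe.Walk ⟨Sum.inl x.1, x.2⟩ ⟨Sum.inl y.1, y.2⟩,
      Q.IsPath ∧
      (∀ a : H''.verts, a ∈ Q.support → ∀ v : V, a.1 = Sum.inl v →
        v ∈ p.support.map Subtype.val) ∧
      (∀ a : H''.verts, a ∈ Q.support → ∀ pr : Σ e : G.edgeSet, Fin (m e),
        a.1 = Sum.inr pr → (pr.1 : Sym2 V) ∈ p.edges.map (Sym2.map Subtype.val)) := by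
  induction p with
  | nil =>
    refine ⟨Walk.nil, Walk.IsPath.nil, ?_, ?_⟩
    · intro a ha v hav
      simp only [support_nil, List.mem_singleton] at ha
      subst ha
      simp only [support_nil, List.map_cons, List.map_nil, List.mem_singleton]
      exact (Sum.inl.inj hav).symm
    · intro a ha pr hav
      simp only [support_nil, List.mem_singleton] at ha
      subst ha
      simp at hav
  | @cons x z y h q ih =>
    rw [Walk.cons_isPath_iff] at hp
    obtain ⟨hq, hxs⟩ := hp
    obtain ⟨Q2, hQ2, hs1, hs2⟩ := ih hq
    have hadj : (contr H'').Adj x.1 z.1 := h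
    obtain ⟨hne, pr, h1, h2⟩ := hadj
    have hpr1 : (pr.1 : Sym2 V) = s(x.1, z.1) :=
      (Sym2.mem_and_mem_iff hne).1 ⟨H''.adj_sub h1, H''.adj_sub h2⟩
    have hprv : Sum.inr pr ∈ H''.verts := h1.snd_mem
    have A1 : H''.coe.Adj ⟨Sum.inl x.1, x.2⟩ ⟨Sum.inr pr, hprv⟩ := h1
    have A2 : H''.coe.Adj ⟨Sum.inr pr, hprv⟩ ⟨Sum.inl z.1, z.2⟩ := H''.adj_symm h2
    have fact1 : (⟨Sum.inl x.1, x.2⟩ : H''.verts) ∉ Q2.support := by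
      intro hmem
      obtain ⟨a, ha, hav⟩ := List.mem_map.1 (hs1 _ hmem x.1 rfl)
      rw [show a = x from Subtype.ext hav] at ha
      exact hxs ha
    have fact2 : (⟨Sum.inr pr, hprv⟩ : H''.verts) ∉ Q2.support := by
      intro hmem
      have h' := hs2 _ hmem pr rfl
      rw [hpr1] at h'
      obtain ⟨ε, hε, hmap⟩ := List.mem_map.1 h'
      have hx : x ∈ ε := by
        have : x.1 ∈ Sym2.map Subtype.val ε := by
          rw [hmap]; exact Sym2.mem_mk_left _ _
        obtain ⟨a, haε, hav⟩ := Sym2.mem_map.1 this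
        rwa [show a = x from Subtype.ext hav] at haε
      exact hxs (mem_support_of_edge q ε hε hx)
    refine ⟨Walk.cons A1 (Walk.cons A2 Q2), ?_, ?_, ?_⟩
    · rw [Walk.cons_isPath_iff, Walk.cons_isPath_iff]
      refine ⟨⟨hQ2, fact2⟩, ?_⟩
      simp only [support_cons, List.mem_cons]
      rintro (habs | habs)
      · simpa using congrArg Subtype.val habs
      · exact fact1 habs
    · intro a ha v hav
      simp only [support_cons, List.mem_cons] at ha
      rcases ha with rfl | rfl | ha
      · have : v = x.1 := (Sum.inl.inj hav).symm
        simp only [support_cons, List.map_cons, List.mem_cons]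
        exact Or.inl this
      · simp at hav
      · have := hs1 a ha v hav
        simp only [support_cons, List.map_cons, List.mem_cons]
        exact Or.inr this
    · intro a ha pr0 hav
      simp only [support_cons, List.mem_cons] at ha
      rcases ha with rfl | rfl | ha
      · simp at hav
      · obtain rfl : pr0 = pr := (Sum.inr.inj hav).symm
        simp only [edges_cons, List.map_cons, List.mem_cons]
        left
        rw [hpr1, Sym2.map_pair_eq]
      · have := hs2 a ha pr0 hav
        simp only [edges_cons, List.map_cons, List.mem_cons]
        exact Or.inr this

lemma contr_connected (hconn : H''.coe.Connected) {v0 : V} (hv0 : Sum.inl v0 ∈ H''.verts) :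
    (contr H'').coe.Connected := by
  have hpre : (contr H'').coe.Preconnected := by
    rintro ⟨u, hu⟩ ⟨w, hw⟩
    obtain ⟨p⟩ := hconn.preconnected ⟨Sum.inl u, hu⟩ ⟨Sum.inl w, hw⟩
    exact proj_reach p.length p rfl rfl hu hw le_rfl
  haveI : Nonempty ((contr H'').verts : Set V) := ⟨⟨v0, hv0⟩⟩
  exact ⟨hpre⟩

lemma contr_acyclic (hac : H''.coe.IsAcyclic) : (contr H'').coe.IsAcyclic := by
  intro v cc hcc
  cases cc with
  | nil => exact hcc.ne_nil rfl
  | @cons _ z _ h q =>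
    rw [Walk.cons_isCycle_iff] at hcc
    obtain ⟨hq, hedge⟩ := hcc
    obtain ⟨Q, hQ, hs1, hs2⟩ := lift_path q hq
    have hadj : (contr H'').Adj v.1 z.1 := h
    obtain ⟨hne, pr, h1, h2⟩ := hadj
    have hpr1 : (pr.1 : Sym2 V) = s(v.1, z.1) :=
      (Sym2.mem_and_mem_iff hne).1 ⟨H''.adj_sub h1, H''.adj_sub h2⟩
    have hprv : Sum.inr pr ∈ H''.verts := h1.snd_mem
    have A1 : H''.coe.Adj ⟨Sum.inl v.1, v.2⟩ ⟨Sum.inr pr, hprv⟩ := h1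
    have A2 : H''.coe.Adj ⟨Sum.inr pr, hprv⟩ ⟨Sum.inl z.1, z.2⟩ := H''.adj_symm h2
    have fact2 : (⟨Sum.inr pr, hprv⟩ : H''.verts) ∉ Q.support := by
      intro hmem
      have h' := hs2 _ hmem pr rfl
      rw [hpr1] at h'
      obtain ⟨ε, hε, hmap⟩ := List.mem_map.1 h'
      have hvε : v ∈ ε := by
        have : v.1 ∈ Sym2.map Subtype.val ε := by
          rw [hmap]; exact Sym2.mem_mk_left _ _
        obtain ⟨a, haε, hav⟩ := Sym2.mem_map.1 this
        rwa [show a = v from Subtype.ext hav] at haε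
      have hzε : z ∈ ε := by
        have : z.1 ∈ Sym2.map Subtype.val ε := by
          rw [hmap]; exact Sym2.mem_mk_right _ _
        obtain ⟨a, haε, hav⟩ := Sym2.mem_map.1 this
        rwa [show a = z from Subtype.ext hav] at haε
      have hune : v ≠ z := fun habs => hne (congrArg Subtype.val habs)
      have : ε = s(v, z) := (Sym2.mem_and_mem_iff hune).1 ⟨hvε, hzε⟩
      rw [this] at hε
      exact hedge hε
    refine hac (Walk.cons A1 (Walk.cons A2 Q)) ?_
    rw [Walk.cons_isCycle_iff]
    constructor
    · rw [Walk.cons_isPath_iff]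
      exact ⟨hQ, fact2⟩
    · simp only [edges_cons, List.mem_cons]
      rintro (habs | habs)
      · rw [Sym2.eq_iff] at habs
        rcases habs with ⟨h1', -⟩ | ⟨h1', -⟩
        · simpa using congrArg Subtype.val h1'
        · exact hne (Sum.inl.inj (congrArg Subtype.val h1'))
      · exact fact2 (Walk.snd_mem_support_of_mem_edges Q habs)

lemma sigma_ext {p q : Σ e : G.edgeSet, Fin (m e)} (h1 : p.1 = q.1)
    (h2 : (p.2 : ℕ) = (q.2 : ℕ)) : p = q := by
  obtain ⟨e1, i1⟩ := p
  obtain ⟨e2, i2⟩ := q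
  cases h1
  simp only at h2 ⊢
  exact congrArg (Sigma.mk e1) (Fin.val_injective h2)

lemma subdivS_reach_inl {a b : H'.verts} (p : H'.coe.Walk a b) :
    (subdivS H' c).coe.Reachable ⟨Sum.inl a.1, subdivS_verts_inl.2 a.2⟩
      ⟨Sum.inl b.1, subdivS_verts_inl.2 b.2⟩ := by
  induction p with
  | nil => exact Reachable.refl _
  | @cons a z b h q ih =>
    have hadj : H'.Adj a.1 z.1 := h
    have hf : s(a.1, z.1) ∈ H'.edgeSet := SimpleGraph.Subgraph.mem_edgeSet.2 hadj
    have hG : s(a.1, z.1) ∈ G.edgeSet := (SimpleGraph.mem_edgeSet G).2 (H'.adj_sub hadj)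
    set e : G.edgeSet := ⟨s(a.1, z.1), hG⟩ with he
    have hv : Sum.inr (⟨e, c e⟩ : Σ e : G.edgeSet, Fin (m e)) ∈ (subdivS H' c).verts :=
      subdivS_verts_inr.2 ⟨hf, rfl⟩
    have A1 : (subdivS H' c).Adj (Sum.inl a.1) (Sum.inr ⟨e, c e⟩) :=
      subdivS_adj_inl_inr.2 ⟨hf, Sym2.mem_mk_left _ _, rfl⟩
    have A2 : (subdivS H' c).Adj (Sum.inr ⟨e, c e⟩) (Sum.inl z.1) :=
      (subdivS H' c).adj_symm (subdivS_adj_inl_inr.2 ⟨hf, Sym2.mem_mk_right _ _, rfl⟩)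
    have C1 : (subdivS H' c).coe.Adj ⟨Sum.inl a.1, subdivS_verts_inl.2 a.2⟩ ⟨_, hv⟩ := A1
    have C2 : (subdivS H' c).coe.Adj ⟨_, hv⟩ ⟨Sum.inl z.1, subdivS_verts_inl.2 z.2⟩ := A2
    exact C1.reachable.trans (C2.reachable.trans ih)

lemma subdivS_connected (hconn : H'.coe.Connected) : (subdivS H' c).coe.Connected := by
  have key : ∀ x : (subdivS H' c).verts, ∃ (v : V) (hv : v ∈ H'.verts),
      (subdivS H' c).coe.Reachable x ⟨Sum.inl v, subdivS_verts_inl.2 hv⟩ := by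
    rintro ⟨xv, hx⟩
    cases xv with
    | inl v => exact ⟨v, subdivS_verts_inl.1 hx, Reachable.refl _⟩
    | inr pr =>
      obtain ⟨he, hpr2⟩ := subdivS_verts_inr.1 hx
      have ha : (pr.1 : Sym2 V).out.1 ∈ (pr.1 : Sym2 V) := Sym2.out_fst_mem _
      have hva : (pr.1 : Sym2 V).out.1 ∈ H'.verts := vert_of_mem_edge he ha
      have A : (subdivS H' c).Adj (Sum.inr pr) (Sum.inl (pr.1 : Sym2 V).out.1) :=
        (subdivS H' c).adj_symm (subdivS_adj_inl_inr.2 ⟨he, ha, hpr2⟩)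
      have CA : (subdivS H' c).coe.Adj ⟨Sum.inr pr, hx⟩
          ⟨Sum.inl (pr.1 : Sym2 V).out.1, subdivS_verts_inl.2 hva⟩ := A
      exact ⟨_, hva, CA.reachable⟩
  have hpre : (subdivS H' c).coe.Preconnected := by
    intro x y
    obtain ⟨v, hv, hx⟩ := key x
    obtain ⟨w, hw, hy⟩ := key y
    obtain ⟨p⟩ := hconn.preconnected ⟨v, hv⟩ ⟨w, hw⟩
    exact hx.trans ((subdivS_reach_inl p).trans hy.symm)
  obtain ⟨a⟩ := hconn.nonempty
  haveI : Nonempty ((subdivS H' c).verts : Set _) := ⟨⟨Sum.inl a.1, subdivS_verts_inl.2 a.2⟩⟩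
  exact ⟨hpre⟩

lemma proj_path (n : ℕ) :
    ∀ {x y : (subdivS H' c).verts} (p : (subdivS H' c).coe.Walk x y) {u w : V}
      (_ : x.1 = Sum.inl u) (_ : y.1 = Sum.inl w)
      (hu : u ∈ H'.verts) (hw : w ∈ H'.verts),
      p.support.Nodup → p.length ≤ n →
      ∃ Q : H'.coe.Walk ⟨u, hu⟩ ⟨w, hw⟩, Q.IsPath ∧
        (∀ a : H'.verts, a ∈ Q.support → Sum.inl a.1 ∈ p.support.map Subtype.val) ∧
        (∀ ε ∈ Q.edges, ∃ pr : Σ e : G.edgeSet, Fin (m e),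
          Sum.inr pr ∈ p.support.map Subtype.val ∧
            Sym2.map Subtype.val ε = (pr.1 : Sym2 V)) := by
  induction n with
  | zero =>
    intro x y p u w hxu hyw hu hw hnd hlen
    cases p with
    | nil =>
      obtain rfl : u = w := Sum.inl.inj (hxu.symm.trans hyw)
      refine ⟨Walk.nil, Walk.IsPath.nil, ?_, ?_⟩
      · intro a ha
        simp only [support_nil, List.mem_singleton] at ha
        subst ha
        simp only [support_nil, List.map_cons, List.map_nil, List.mem_singleton]
        exact hxu.symm
      · intro ε hε
        simp at hε
    | cons h q => simp at hlen
  | succ n ih =>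
    intro x y p u w hxu hyw hu hw hnd hlen
    cases p with
    | nil =>
      obtain rfl : u = w := Sum.inl.inj (hxu.symm.trans hyw)
      refine ⟨Walk.nil, Walk.IsPath.nil, ?_, ?_⟩
      · intro a ha
        simp only [support_nil, List.mem_singleton] at ha
        subst ha
        simp only [support_nil, List.map_cons, List.map_nil, List.mem_singleton]
        exact hxu.symm
      · intro ε hε
        simp at hε
    | @cons _ z _ h q =>
      have hSadj : (subdivS H' c).Adj x.1 z.1 := h
      rcases subdivS_adj_cases hSadj with ⟨v', pr, hx', hz'⟩ | ⟨v', pr, hx', -⟩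
      swap
      · rw [hxu] at hx'; simp at hx'
      have hA1 : (subdivS H' c).Adj (Sum.inl u) (Sum.inr pr) := by
        rw [← hxu, ← hz']; exact h
      obtain ⟨hepr, humem, -⟩ := subdivS_adj_inl_inr.1 hA1
      cases q with
      | nil =>
        rw [hyw] at hz'; simp at hz'
      | @cons _ z2 _ h2 q2 =>
        have hSadj2 : (subdivS H' c).Adj z.1 z2.1 := h2
        rcases subdivS_adj_cases hSadj2 with ⟨v2, pr2, hz'', -⟩ | ⟨u2, pr2, -, hz2'⟩
        · rw [hz'] at hz''; simp at hz''
        have hA2 : (subdivS H' c).Adj (Sum.inl u2) (Sum.inr pr) := by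
          rw [← hz2', ← hz']; exact (subdivS H' c).adj_symm h2
        obtain ⟨-, hu2mem, -⟩ := subdivS_adj_inl_inr.1 hA2
        have hu2 : u2 ∈ H'.verts := vert_of_mem_edge hepr hu2mem
        rw [Walk.support_cons, Walk.support_cons] at hnd
        have hxnotin : x ∉ z :: q2.support := (List.nodup_cons.1 hnd).1
        have hnd2 : q2.support.Nodup := ((List.nodup_cons.1 hnd).2.of_cons)
        have hne : u ≠ u2 := by
          intro hEq
          apply hxnotin
          have : x = z2 := Subtype.ext (by rw [hxu, hz2', hEq])
          rw [this]
          exact List.mem_cons_of_mem _ q2.start_mem_support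
        have hprs : (pr.1 : Sym2 V) = s(u, u2) :=
          (Sym2.mem_and_mem_iff hne).1 ⟨humem, hu2mem⟩
        have hadjH : H'.Adj u u2 := SimpleGraph.Subgraph.mem_edgeSet.1 (by rw [← hprs]; exact hepr)
        have hlen2 : q2.length ≤ n := by simp at hlen; omega
        obtain ⟨Q2, hQ2, hs1, hs2⟩ := ih q2 hz2' hyw hu2 hw hnd2 hlen2
        have CoeAdj : H'.coe.Adj ⟨u, hu⟩ ⟨u2, hu2⟩ := hadjH
        refine ⟨Walk.cons CoeAdj Q2, ?_, ?_, ?_⟩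
        · rw [Walk.cons_isPath_iff]
          refine ⟨hQ2, ?_⟩
          intro hmem
          obtain ⟨a, ha, hav⟩ := List.mem_map.1 (hs1 _ hmem)
          have : a = x := Subtype.ext (by rw [hav, hxu])
          rw [this] at ha
          exact hxnotin (List.mem_cons_of_mem _ ha)
        · intro a ha
          simp only [support_cons, List.mem_cons] at ha
          simp only [support_cons, List.map_cons, List.mem_cons]
          rcases ha with rfl | ha
          · exact Or.inl hxu.symm
          · exact Or.inr (Or.inr (hs1 a ha))
        · intro ε hε
          simp only [edges_cons, List.mem_cons] at hε
          rcases hε with rfl | hε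
          · refine ⟨pr, ?_, ?_⟩
            · simp only [support_cons, List.map_cons, List.mem_cons]
              exact Or.inr (Or.inl hz'.symm)
            · rw [Sym2.map_pair_eq]
              exact hprs.symm
          · obtain ⟨pr', hmem, hmap⟩ := hs2 ε hε
            refine ⟨pr', ?_, hmap⟩
            simp only [support_cons, List.map_cons, List.mem_cons] at hmem ⊢
            exact Or.inr (Or.inr hmem)

lemma subdivS_no_cycle_at_inl (hac : H'.coe.IsAcyclic) {u0 : V} {x : (subdivS H' c).verts}
    (hx : x.1 = Sum.inl u0) (cc : (subdivS H' c).coe.Walk x x) : ¬cc.IsCycle := by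
  intro hcc
  cases cc with
  | nil => exact hcc.ne_nil rfl
  | @cons _ z1 _ h1 rest1 =>
    have hSadj : (subdivS H' c).Adj x.1 z1.1 := h1
    rcases subdivS_adj_cases hSadj with ⟨v', p0, -, hz1⟩ | ⟨v', p0, hx', -⟩
    swap
    · rw [hx] at hx'; simp at hx'
    have hA1 : (subdivS H' c).Adj (Sum.inl u0) (Sum.inr p0) := by
      rw [← hx, ← hz1]; exact h1
    obtain ⟨hep0, hu0mem, hp02⟩ := subdivS_adj_inl_inr.1 hA1
    rw [Walk.cons_isCycle_iff] at hcc
    obtain ⟨hrest1, hedge1⟩ := hcc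
    cases rest1 with
    | nil =>
      rw [hx] at hz1; simp at hz1
    | @cons _ z2 _ h2 q =>
      have hSadj2 : (subdivS H' c).Adj z1.1 z2.1 := h2
      rcases subdivS_adj_cases hSadj2 with ⟨v2, pr2, hz1', -⟩ | ⟨u1, pr2, -, hz2⟩
      · rw [hz1] at hz1'; simp at hz1'
      have hA2 : (subdivS H' c).Adj (Sum.inl u1) (Sum.inr p0) := by
        rw [← hz2, ← hz1]; exact (subdivS H' c).adj_symm h2
      obtain ⟨-, hu1mem, -⟩ := subdivS_adj_inl_inr.1 hA2
      rw [Walk.cons_isPath_iff] at hrest1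
      obtain ⟨hq, hz1ns⟩ := hrest1
      by_cases hEq : u0 = u1
      · have hxz2 : x = z2 := Subtype.ext (by rw [hx, hz2, hEq])
        cases q with
        | nil =>
          apply hedge1
          simp only [edges_cons, edges_nil, List.mem_singleton]
          exact Sym2.eq_swap
        | @cons _ z3 _ h3 q3 =>
          rw [Walk.cons_isPath_iff] at hq
          exact hq.2 (hxz2 ▸ Walk.end_mem_support q3)
      · have hprs : (p0.1 : Sym2 V) = s(u0, u1) :=
          (Sym2.mem_and_mem_iff hEq).1 ⟨hu0mem, hu1mem⟩
        have hadjH : H'.Adj u0 u1 :=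
          SimpleGraph.Subgraph.mem_edgeSet.1 (by rw [← hprs]; exact hep0)
        have hu0' : u0 ∈ H'.verts := vert_of_mem_edge hep0 hu0mem
        have hu1' : u1 ∈ H'.verts := vert_of_mem_edge hep0 hu1mem
        obtain ⟨Q, hQ, hs1, hs2⟩ :=
          proj_path q.length q hz2 hx hu1' hu0' hq.support_nodup le_rfl
        refine hac (Walk.cons (show H'.coe.Adj ⟨u0, hu0'⟩ ⟨u1, hu1'⟩ from hadjH) Q) ?_
        rw [Walk.cons_isCycle_iff]
        refine ⟨hQ, ?_⟩
        intro habs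
        obtain ⟨pr', hprmem, hprmap⟩ := hs2 _ habs
        rw [Sym2.map_pair_eq] at hprmap
        have hpr1 : (pr'.1 : Sym2 V) = (p0.1 : Sym2 V) := by
          rw [← hprmap, hprs]
        obtain ⟨a, haq, hav⟩ := List.mem_map.1 hprmem
        have hprv' : Sum.inr pr' ∈ (subdivS H' c).verts := by rw [← hav]; exact a.2
        obtain ⟨-, hpr'2⟩ := subdivS_verts_inr.1 hprv'
        have hpp : pr' = p0 := by
          have h1' : pr'.1 = p0.1 := Subtype.ext hpr1
          refine sigma_ext h1' ?_
          rw [hpr'2, hp02]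
          exact congrArg (fun e => (c e : ℕ)) h1'
        have haz1 : a = z1 := Subtype.ext (by rw [hav, hpp, ← hz1])
        rw [haz1] at haq
        exact hz1ns haq

lemma subdivS_acyclic (hac : H'.coe.IsAcyclic) : (subdivS H' c).coe.IsAcyclic := by
  classical
  intro x cc hcc
  rcases hval : x.1 with v | pr
  · exact subdivS_no_cycle_at_inl hac hval cc hcc
  · cases cc with
    | nil => exact hcc.ne_nil rfl
    | @cons _ z _ h q =>
      have hSadj : (subdivS H' c).Adj x.1 z.1 := h
      rcases subdivS_adj_cases hSadj with ⟨v', pr', hx', -⟩ | ⟨v', pr', -, hz'⟩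
      · rw [hval] at hx'; simp at hx'
      · have hz : z ∈ (Walk.cons h q).support := by
          rw [Walk.support_cons]
          exact List.mem_cons_of_mem _ q.start_mem_support
        exact subdivS_no_cycle_at_inl hac hz' ((Walk.cons h q).rotate _ hz) (hcc.rotate hz)

end Walks

section Counting

variable [Fintype V]

lemma double_count (S0 : Set (Sym2 V)) (hd : ∀ e ∈ S0, ¬ e.IsDiag) :
    {q : Sym2 V × V | q.1 ∈ S0 ∧ q.2 ∈ q.1}.ncard = 2 * S0.ncard := by
  classical
  have main : ∀ s : Set (Sym2 V), s.Finite → (∀ e ∈ s, ¬ e.IsDiag) →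
      {q : Sym2 V × V | q.1 ∈ s ∧ q.2 ∈ q.1}.ncard = 2 * s.ncard := by
    intro s hs
    refine Set.Finite.induction_on s hs ?_ ?_
    · intro _
      simp
    · rintro a s' ha hs' IH hd'
      have hd'' : ∀ e ∈ s', ¬ e.IsDiag := fun e he => hd' e (Set.mem_insert_of_mem _ he)
      induction a with
      | _ x0 y0 =>
        have hne : x0 ≠ y0 := fun habs =>
          hd' s(x0, y0) (Set.mem_insert _ _) (Sym2.mk_isDiag_iff.2 habs)
        have hset : {q : Sym2 V × V | q.1 ∈ insert s(x0, y0) s' ∧ q.2 ∈ q.1} =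
            {(s(x0, y0), x0), (s(x0, y0), y0)} ∪ {q : Sym2 V × V | q.1 ∈ s' ∧ q.2 ∈ q.1} := by
          ext ⟨f, v⟩
          simp only [Set.mem_setOf_eq, Set.mem_insert_iff, Set.mem_union,
            Set.mem_singleton_iff, Prod.mk.injEq]
          constructor
          · rintro ⟨rfl | hf, hv⟩
            · rcases Sym2.mem_iff.1 hv with rfl | rfl
              · exact Or.inl (Or.inl ⟨rfl, rfl⟩)
              · exact Or.inl (Or.inr ⟨rfl, rfl⟩)
            · exact Or.inr ⟨hf, hv⟩
          · rintro ((⟨rfl, rfl⟩ | ⟨rfl, rfl⟩) | ⟨hf, hv⟩)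
            · exact ⟨Or.inl rfl, Sym2.mem_mk_left _ _⟩
            · exact ⟨Or.inl rfl, Sym2.mem_mk_right _ _⟩
            · exact ⟨Or.inr hf, hv⟩
        have hdisj : Disjoint ({(s(x0, y0), x0), (s(x0, y0), y0)} :
            Set (Sym2 V × V)) {q : Sym2 V × V | q.1 ∈ s' ∧ q.2 ∈ q.1} := by
          rw [Set.disjoint_left]
          rintro ⟨f, v⟩ (h | h) ⟨hf, -⟩ <;>
            · obtain ⟨rfl, -⟩ := Prod.ext_iff.1 h
              exact ha hf
        rw [hset, Set.ncard_union_eq hdisj (Set.toFinite _) (Set.toFinite _),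
          Set.ncard_insert_of_notMem ha (Set.toFinite _), IH hd'',
          Set.ncard_pair (by simp [hne])]
        ring
  exact main S0 (Set.toFinite _) hd

variable {H'' : (subdivGraph G m).Subgraph}

omit [Fintype V] in
lemma contr_edge_not_diag : ∀ f ∈ (contr H'').edgeSet, ¬ f.IsDiag := by
  intro f hf
  induction f with
  | _ u w =>
    exact fun hdiag => (SimpleGraph.Subgraph.mem_edgeSet.1 hf).1 (Sym2.mk_isDiag_iff.1 hdiag)

lemma contr_edge_card :
    2 * (contr H'').edgeSet.ncard ≤ H''.edgeSet.ncard := by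
  classical
  rw [← double_count _ contr_edge_not_diag]
  have hpick : ∀ f ∈ (contr H'').edgeSet, ∃ pr : Σ e : G.edgeSet, Fin (m e),
      (pr.1 : Sym2 V) = f ∧ ∀ v ∈ f, H''.Adj (Sum.inl v) (Sum.inr pr) := by
    intro f hf
    induction f with
    | _ u w =>
      obtain ⟨hne, pr, hA1, hA2⟩ := SimpleGraph.Subgraph.mem_edgeSet.1 hf
      have g1 : u ∈ (pr.1 : Sym2 V) := H''.adj_sub hA1
      have g2 : w ∈ (pr.1 : Sym2 V) := H''.adj_sub hA2
      refine ⟨pr, (Sym2.mem_and_mem_iff hne).1 ⟨g1, g2⟩, ?_⟩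
      intro v hv
      rcases Sym2.mem_iff.1 hv with rfl | rfl
      exacts [hA1, hA2]
  choose pick hpick1 hpick2 using hpick
  set φ : Sym2 V × V → Sym2 (V ⊕ (Σ e : G.edgeSet, Fin (m e))) := fun q =>
    if h : q.1 ∈ (contr H'').edgeSet
    then s(Sum.inl q.2, Sum.inr (pick q.1 h))
    else s(Sum.inl q.2, Sum.inl q.2) with hφ
  have hinj : Set.InjOn φ {q : Sym2 V × V | q.1 ∈ (contr H'').edgeSet ∧ q.2 ∈ q.1} := by
    rintro ⟨f, v⟩ ⟨hf, -⟩ ⟨f', v'⟩ ⟨hf', -⟩ heq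
    simp only [hφ, dif_pos hf, dif_pos hf'] at heq
    rw [Sym2.eq_iff] at heq
    rcases heq with ⟨h1, h2⟩ | ⟨h1, h2⟩
    · obtain rfl : v = v' := Sum.inl.inj h1
      have : pick f hf = pick f' hf' := Sum.inr.inj h2
      have hff : f = f' := by rw [← hpick1 f hf, this, hpick1 f' hf']
      subst hff
      rfl
    · simp at h1
  have himg : φ '' {q : Sym2 V × V | q.1 ∈ (contr H'').edgeSet ∧ q.2 ∈ q.1} ⊆
      H''.edgeSet := by
    rintro ε ⟨⟨f, v⟩, ⟨hf, hv⟩, rfl⟩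
    simp only [hφ, dif_pos hf]
    exact SimpleGraph.Subgraph.mem_edgeSet.2 (hpick2 f hf v hv)
  calc {q : Sym2 V × V | q.1 ∈ (contr H'').edgeSet ∧ q.2 ∈ q.1}.ncard
      = (φ '' {q : Sym2 V × V | q.1 ∈ (contr H'').edgeSet ∧ q.2 ∈ q.1}).ncard :=
        (Set.ncard_image_of_injOn hinj).symm
    _ ≤ H''.edgeSet.ncard := Set.ncard_le_ncard himg (Set.toFinite _)

omit [Fintype V] in
lemma subdivS_edge_shape {ε : Sym2 (V ⊕ (Σ e : G.edgeSet, Fin (m e)))}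
    (hε : ε ∈ (subdivS H' c).edgeSet) :
    ∃ (e : G.edgeSet) (v : V), (e : Sym2 V) ∈ H'.edgeSet ∧ v ∈ (e : Sym2 V) ∧
      ε = s(Sum.inl v, Sum.inr ⟨e, c e⟩) := by
  induction ε with
  | _ xw yw =>
    have hadj : (subdivS H' c).Adj xw yw := SimpleGraph.Subgraph.mem_edgeSet.1 hε
    obtain ⟨e, v, he, hv, ⟨rfl, rfl⟩ | ⟨rfl, rfl⟩⟩ := hadj
    · exact ⟨e, v, he, hv, rfl⟩
    · exact ⟨e, v, he, hv, Sym2.eq_swap⟩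

lemma subdivS_edge_card :
    (subdivS H' c).edgeSet.ncard ≤ 2 * H'.edgeSet.ncard := by
  classical
  have hd : ∀ f ∈ H'.edgeSet, ¬ f.IsDiag := by
    intro f hf
    induction f with
    | _ u w =>
      exact fun hdiag =>
        (H'.adj_sub (SimpleGraph.Subgraph.mem_edgeSet.1 hf)).ne (Sym2.mk_isDiag_iff.1 hdiag)
  set ψ : Sym2 V × V → Sym2 (V ⊕ (Σ e : G.edgeSet, Fin (m e))) := fun q =>
    if h : q.1 ∈ G.edgeSet
    then s(Sum.inl q.2, Sum.inr ⟨⟨q.1, h⟩, c ⟨q.1, h⟩⟩)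
    else s(Sum.inl q.2, Sum.inl q.2) with hψ
  have himg : (subdivS H' c).edgeSet ⊆
      ψ '' {q : Sym2 V × V | q.1 ∈ H'.edgeSet ∧ q.2 ∈ q.1} := by
    intro ε hε
    obtain ⟨e, v, he, hv, rfl⟩ := subdivS_edge_shape hε
    refine ⟨((e : Sym2 V), v), ⟨he, hv⟩, ?_⟩
    simp only [hψ, dif_pos e.2]
  calc (subdivS H' c).edgeSet.ncard
      ≤ (ψ '' {q : Sym2 V × V | q.1 ∈ H'.edgeSet ∧ q.2 ∈ q.1}).ncard :=
        Set.ncard_le_ncard himg (Set.toFinite _)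
    _ ≤ {q : Sym2 V × V | q.1 ∈ H'.edgeSet ∧ q.2 ∈ q.1}.ncard :=
        Set.ncard_image_le (Set.toFinite _)
    _ = 2 * H'.edgeSet.ncard := double_count _ hd

omit [Fintype V] in
lemma contr_edge_witness {H'' : (subdivGraph G m).Subgraph} {f : Sym2 V}
    (hf : f ∈ (contr H'').edgeSet) :
    ∃ pr : Σ e : G.edgeSet, Fin (m e),
      (pr.1 : Sym2 V) = f ∧ ∀ v ∈ f, H''.Adj (Sum.inl v) (Sum.inr pr) := by
  induction f with
  | _ u w =>
    obtain ⟨hne, pr, hA1, hA2⟩ := SimpleGraph.Subgraph.mem_edgeSet.1 hf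
    have g1 : u ∈ (pr.1 : Sym2 V) := H''.adj_sub hA1
    have g2 : w ∈ (pr.1 : Sym2 V) := H''.adj_sub hA2
    refine ⟨pr, (Sym2.mem_and_mem_iff hne).1 ⟨g1, g2⟩, ?_⟩
    intro v hv
    rcases Sym2.mem_iff.1 hv with rfl | rfl
    exacts [hA1, hA2]

omit [Fintype V] in
lemma edge_inr_unique {b : Sym2 (V ⊕ (Σ e : G.edgeSet, Fin (m e)))}
    (hb : b ∈ (subdivGraph G m).edgeSet)
    {pr pr' : Σ e : G.edgeSet, Fin (m e)} (h1 : Sum.inr pr ∈ b) (h2 : Sum.inr pr' ∈ b) :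
    pr = pr' := by
  induction b with
  | _ x y =>
    have hadj : (subdivGraph G m).Adj x y := (SimpleGraph.mem_edgeSet _).1 hb
    rcases subdivGraph_adj_cases hadj with ⟨v, p, rfl, rfl, -⟩ | ⟨v, p, rfl, rfl, -⟩
    · rcases Sym2.mem_iff.1 h1 with h | h
      · simp at h
      · rcases Sym2.mem_iff.1 h2 with h' | h'
        · simp at h'
        · rw [Sum.inr.inj h, Sum.inr.inj h']
    · rcases Sym2.mem_iff.1 h1 with h | h
      · rcases Sym2.mem_iff.1 h2 with h' | h'
        · rw [Sum.inr.inj h, Sum.inr.inj h']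
        · simp at h'
      · simp at h

end Counting

end SteinerAux


open SteinerAux in
open Classical in
theorem steinerTree_interdiction_subdivision {V : Type*} [Fintype V] (G : SimpleGraph V)
    (T : Set V) (C : Set (Sym2 V)) (hC : C ⊆ G.edgeSet) (k t : ℕ)
    (m : G.edgeSet → ℕ)
    (hm : ∀ e : G.edgeSet, m e = if (e : Sym2 V) ∈ C then 1 else k + 1) :
    (∃ B : Set (Sym2 V), B ⊆ C ∧ B.ncard ≤ k ∧
        ∀ H' : G.Subgraph, IsSteinerTree G T H' → H'.edgeSet.ncard ≤ t →
          (H'.edgeSet ∩ B).Nonempty) ↔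
      (∃ B' : Set (Sym2 (V ⊕ (Σ e : G.edgeSet, Fin (m e)))),
        B' ⊆ (subdivGraph G m).edgeSet ∧ B'.ncard ≤ k ∧
        ∀ H'' : (subdivGraph G m).Subgraph,
          IsSteinerTree (subdivGraph G m) (Sum.inl '' T) H'' → H''.edgeSet.ncard ≤ 2 * t →
            (H''.edgeSet ∩ B').Nonempty) := by
  classical
  have hmpos : ∀ e : G.edgeSet, 0 < m e := by
    intro e
    rw [hm]
    split <;> omega
  constructor
  · rintro ⟨B, hBC, hBk, hhit⟩
    set θ : Sym2 V → Sym2 (V ⊕ (Σ e : G.edgeSet, Fin (m e))) := fun f =>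
      if h : f ∈ G.edgeSet
      then s(Sum.inl f.out.1, Sum.inr ⟨⟨f, h⟩, ⟨0, hmpos _⟩⟩)
      else s(Sum.inl f.out.1, Sum.inl f.out.1) with hθ
    refine ⟨θ '' B, ?_, le_trans (Set.ncard_image_le (Set.toFinite _)) hBk, ?_⟩
    · rintro _ ⟨f, hfB, rfl⟩
      have hfG : f ∈ G.edgeSet := hC (hBC hfB)
      simp only [hθ, dif_pos hfG]
      exact (SimpleGraph.mem_edgeSet _).2 (Sym2.out_fst_mem f)
    · intro H'' hSt hcard
      obtain ⟨htree, hT⟩ := hSt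
      by_cases hinl : ∃ v, Sum.inl v ∈ H''.verts
      · obtain ⟨v0, hv0⟩ := hinl
        have hctree : (contr H'').coe.IsTree :=
          ⟨contr_connected htree.isConnected hv0, contr_acyclic htree.IsAcyclic⟩
        have hcST : IsSteinerTree G T (contr H'') :=
          ⟨hctree, fun v hv => hT ⟨v, hv, rfl⟩⟩
        have hcnt : (contr H'').edgeSet.ncard ≤ t := by
          have := contr_edge_card (H'' := H'')
          omega
        obtain ⟨f, hfE, hfB⟩ := hhit _ hcST hcnt
        have hfC : f ∈ C := hBC hfB
        have hfG : f ∈ G.edgeSet := hC hfC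
        obtain ⟨pr, hpr1, hpradj⟩ := contr_edge_witness hfE
        have hadj : H''.Adj (Sum.inl f.out.1) (Sum.inr pr) := hpradj _ (Sym2.out_fst_mem f)
        have hm1 : m pr.1 = 1 := by
          rw [hm pr.1, if_pos (by rw [hpr1]; exact hfC)]
        have hpr : pr = ⟨⟨f, hfG⟩, ⟨0, hmpos _⟩⟩ := by
          refine sigma_ext (Subtype.ext hpr1) ?_
          have h2 := pr.2.2
          show (pr.2 : ℕ) = 0
          omega
        refine ⟨s(Sum.inl f.out.1, Sum.inr pr),
          SimpleGraph.Subgraph.mem_edgeSet.2 hadj, f, hfB, ?_⟩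
        simp only [hθ, dif_pos hfG]
        rw [hpr]
      · push_neg at hinl
        obtain ⟨x⟩ := htree.isConnected.nonempty
        obtain ⟨xv, hx⟩ := x
        cases xv with
        | inl v => exact absurd hx (hinl v)
        | inr pr =>
          exfalso
          set a : V := (pr.1 : Sym2 V).out.1 with ha
          have h1 : IsSteinerTree G T (G.singletonSubgraph a) := by
            constructor
            · constructor
              · exact (SimpleGraph.Subgraph.singletonSubgraph_connected).coe
              · intro w p hp
                cases p with
                | nil => exact hp.ne_nil rfl
                | @cons _ z _ h q =>
                  have hGadj := (G.singletonSubgraph a).adj_sub h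
                  have hw : (w : V) = a := w.2
                  have hz : (z : V) = a := z.2
                  rw [hw, hz] at hGadj
                  exact G.loopless.irrefl _ hGadj
            · intro v hv
              exact absurd (hT ⟨v, hv, rfl⟩) (hinl v)
          have h2 : (G.singletonSubgraph a).edgeSet.ncard ≤ t := by
            rw [SimpleGraph.edgeSet_singletonSubgraph]
            simp
          obtain ⟨f, hf, -⟩ := hhit _ h1 h2
          rw [SimpleGraph.edgeSet_singletonSubgraph] at hf
          exact hf
  · rintro ⟨B', hB'G, hB'k, hhit⟩
    set B : Set (Sym2 V) := {f | f ∈ C ∧ ∃ b ∈ B', ∃ pr : Σ e : G.edgeSet, Fin (m e),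
      Sum.inr pr ∈ b ∧ (pr.1 : Sym2 V) = f} with hB
    have hBC : B ⊆ C := fun f hf => hf.1
    have hBk' : B.ncard ≤ k := by
      have hg : ∀ f : Sym2 V, f ∈ B → ∃ b, b ∈ B' ∧ ∃ pr : Σ e : G.edgeSet, Fin (m e),
          Sum.inr pr ∈ b ∧ (pr.1 : Sym2 V) = f := fun f hf => hf.2
      choose g hg1 hg2 using hg
      set g' : Sym2 V → Sym2 (V ⊕ (Σ e : G.edgeSet, Fin (m e))) := fun f =>
        if h : f ∈ B then g f h else s(Sum.inl f.out.1, Sum.inl f.out.1) with hg'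
      have hmaps : ∀ f ∈ B, g' f ∈ B' := by
        intro f hf
        simp only [hg', dif_pos hf]
        exact hg1 f hf
      have hinj : Set.InjOn g' B := by
        intro f hf f' hf' heq
        simp only [hg', dif_pos hf, dif_pos hf'] at heq
        obtain ⟨pr, hpr, hpr1⟩ := hg2 f hf
        obtain ⟨pr', hpr', hpr1'⟩ := hg2 f' hf'
        rw [heq] at hpr
        have := edge_inr_unique (hB'G (hg1 f' hf')) hpr hpr'
        rw [← hpr1, ← hpr1', this]
      exact le_trans (Set.ncard_le_ncard_of_injOn g' hmaps hinj (Set.toFinite _)) hB'k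
    have hgood : ∀ e : G.edgeSet, (e : Sym2 V) ∉ C →
        ∃ i : Fin (m e), ∀ b ∈ B', Sum.inr (⟨e, i⟩ : Σ e : G.edgeSet, Fin (m e)) ∉ b := by
      intro e heC
      by_contra hbad
      push_neg at hbad
      choose bb hbb1 hbb2 using hbad
      have hinj2 : Function.Injective bb := by
        intro i j hij
        have h1 := hbb2 i
        rw [hij] at h1
        have := edge_inr_unique (hB'G (hbb1 j)) h1 (hbb2 j)
        have h2 := (Sigma.mk.inj_iff.1 this).2
        exact eq_of_heq h2
      have hle : (Set.univ : Set (Fin (m e))).ncard ≤ B'.ncard :=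
        Set.ncard_le_ncard_of_injOn bb (fun i _ => hbb1 i) hinj2.injOn (Set.toFinite _)
      rw [Set.ncard_univ, Nat.card_eq_fintype_card, Fintype.card_fin, hm e, if_neg heC] at hle
      omega
    set c : ∀ e : G.edgeSet, Fin (m e) := fun e =>
      if h : (e : Sym2 V) ∉ C then (hgood e h).choose else ⟨0, hmpos e⟩ with hc
    refine ⟨B, hBC, hBk', ?_⟩
    intro H' hSt hcard
    obtain ⟨htree, hT⟩ := hSt
    have hStree : IsSteinerTree (subdivGraph G m) (Sum.inl '' T) (subdivS H' c) := by
      constructor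
      · exact ⟨subdivS_connected htree.isConnected, subdivS_acyclic htree.IsAcyclic⟩
      · rintro _ ⟨v, hv, rfl⟩
        exact subdivS_verts_inl.2 (hT hv)
    have hcard' : (subdivS H' c).edgeSet.ncard ≤ 2 * t :=
      le_trans subdivS_edge_card (by omega)
    obtain ⟨b, hbE, hbB'⟩ := hhit _ hStree hcard'
    obtain ⟨e, v, he, hv, rfl⟩ := subdivS_edge_shape hbE
    have heC : (e : Sym2 V) ∈ C := by
      by_contra heC
      refine (hgood e heC).choose_spec _ hbB' ?_
      have hce : c e = (hgood e heC).choose := by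
        simp only [hc, dif_pos heC]
      rw [← hce]
      exact Sym2.mem_mk_right _ _
    exact ⟨(e : Sym2 V), he, heC, s(Sum.inl v, Sum.inr ⟨e, c e⟩), hbB', ⟨e, c e⟩,
      Sym2.mem_mk_right _ _, rfl⟩
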